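/- arXiv:1202.4539 — 2 statements merged into one kernel-verified Lean document; each statement's English description precedes it below -/
import Mathlib

section
/- There exists an absolute constant γ > 0 with the following property: for every real M ≥ 2 and every sequence of positive real numbers t_1, t_2, t_3, ... satisfying t_{j+1}/t_j ≥ 1 + 1/M for all j ≥ 1, there exists a real number α such that ‖α t_j‖ ≥ γ / (M log M) for all j ≥ 1. -/
open Filter

/-- Distance from a real number to the nearest integer. -/
noncomputable def nint (x : ℝ) : ℝ := |x - round x|

namespace PS9

open Finset

noncomputable section

variable (u : ℕ → ℝ) (s : ℕ) (M : ℝ)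

def eps : ℝ := ((2:ℝ)^s)⁻¹

def lvl (j : ℕ) : ℕ := (Int.log 2 (u j * 2^s)).toNat + 1

def meets (n j k : ℕ) : Prop :=
  ∃ x ∈ Set.Icc ((k:ℝ)/2^n) ((k+1)/2^n), ∃ p : ℤ, |x * u j - p| < eps s

def badp (n k : ℕ) : Prop := ∃ j, lvl u s j = n ∧ meets u s n j k

open Classical in
def S : ℕ → Finset ℕ := fun n => Nat.rec {0}
  (fun n prev => (prev.biUnion (fun k => {2*k, 2*k+1})).filter (fun k => ¬ badp u s (n+1) k)) n

open Classical in
lemma S_succ (n : ℕ) : S u s (n+1)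
    = ((S u s n).biUnion (fun k => {2*k, 2*k+1})).filter (fun k => ¬ badp u s (n+1) k) := rfl

lemma eps_pos : 0 < eps s := by unfold eps; positivity

lemma eps_mul : eps s * 2^s = 1 := by unfold eps; field_simp

lemma lvl_bracket {j : ℕ} (hu : 1 ≤ u j) :
    s + 1 ≤ lvl u s j ∧ eps s * 2^(lvl u s j - 1) ≤ u j ∧ u j < eps s * 2^(lvl u s j) := by
  have h2s : (0:ℝ) < 2^s := by positivity
  have hr : (0:ℝ) < u j * 2^s := by nlinarith
  have hb : 1 < 2 := one_lt_two
  set L := Int.log 2 (u j * 2^s) with hL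
  have hsL : (s:ℤ) ≤ L := by
    rw [← Int.zpow_le_iff_le_log hb hr]
    rw [show ((2:ℕ):ℝ) = (2:ℝ) by norm_num, zpow_natCast]
    nlinarith
  have hL0 : 0 ≤ L := le_trans (by positivity) hsL
  obtain ⟨ℓ, hℓ⟩ : ∃ ℓ:ℕ, (ℓ:ℤ) = L := ⟨L.toNat, Int.toNat_of_nonneg hL0⟩
  have h1 : ((2:ℕ):ℝ) ^ L ≤ u j * 2^s := Int.zpow_log_le_self hb hr
  have h2 : u j * 2^s < ((2:ℕ):ℝ) ^ (L + 1) := Int.lt_zpow_succ_log_self hb _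
  rw [← hℓ] at h1 h2 hsL
  have hz1 : ((2:ℕ):ℝ) ^ (ℓ:ℤ) = (2:ℝ) ^ ℓ := by rw [zpow_natCast]; norm_num
  have hz2 : ((2:ℕ):ℝ) ^ ((ℓ:ℤ) + 1) = (2:ℝ) ^ (ℓ + 1) := by
    rw [show ((ℓ:ℤ) + 1) = ((ℓ + 1 : ℕ) : ℤ) by push_cast; ring, zpow_natCast]; norm_num
  rw [hz1] at h1; rw [hz2] at h2
  have hLt : lvl u s j = ℓ + 1 := by
    unfold lvl; rw [← hL, ← hℓ]; simp
  have hsl : s ≤ ℓ := by exact_mod_cast hsL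
  refine ⟨by omega, ?_, ?_⟩
  · have heq : lvl u s j - 1 = ℓ := by omega
    rw [heq, eps, inv_mul_eq_div, div_le_iff₀ h2s]
    linarith
  · rw [hLt, eps, inv_mul_eq_div, lt_div_iff₀ h2s]
    linarith

lemma lvl_ge {j : ℕ} (hu : 1 ≤ u j) : s + 1 ≤ lvl u s j := (lvl_bracket u s hu).1

section Growth

variable (hM : 2 ≤ M) (hpos : ∀ j, 0 < u j) (hratio : ∀ j, (1 + 1/M) * u j ≤ u (j+1))

include hM hpos hratio in
lemma u_growth (j d : ℕ) : (1 + d/M) * u j ≤ u (j + d) := by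
  have hM0 : (0:ℝ) < M := by linarith
  induction d with
  | zero => simp
  | succ d ih =>
      push_cast
      have h1 : (1 + 1/M) * u (j + d) ≤ u (j + d + 1) := hratio _
      have h1M : (0:ℝ) < 1 + 1/M := by positivity
      have h2 : (1 + ((d:ℝ)+1)/M) * u j ≤ (1 + 1/M) * ((1 + d/M) * u j) := by
        have hu : (0:ℝ) ≤ u j := (hpos j).le
        have key : (1 + ((d:ℝ)+1)/M) ≤ (1 + 1/M) * (1 + d/M) := by
          have he : (1 + 1/M) * (1 + (d:ℝ)/M) = 1 + ((d:ℝ)+1)/M + d/M^2 := by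
            field_simp; ring
          rw [he]
          have : (0:ℝ) ≤ (d:ℝ)/M^2 := by positivity
          linarith
        nlinarith
      calc (1 + ((d:ℝ)+1)/M) * u j ≤ (1 + 1/M) * ((1 + d/M) * u j) := h2
        _ ≤ (1 + 1/M) * u (j + d) := by nlinarith [ih]
        _ ≤ u (j + d + 1) := h1

include hM hpos hratio in
lemma u_mono (hu0 : u 0 = 1) : ∀ j, 1 ≤ u j := by
  intro j
  have hM0 : (0:ℝ) < M := by linarith
  have h2 := u_growth u M hM hpos hratio 0 j
  rw [hu0, mul_one] at h2
  simp only [zero_add] at h2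
  have : (0:ℝ) ≤ (j:ℝ)/M := by positivity
  linarith

include hM hpos hratio in
lemma window (hu1 : ∀ j, 1 ≤ u j) {j j' n : ℕ} (hjj : j ≤ j')
    (h1 : lvl u s j = n) (h2 : lvl u s j' = n) : j' - j < ⌈M⌉₊ := by
  by_contra hcon
  push_neg at hcon
  have hM0 : (0:ℝ) < M := by linarith
  have hMd : M ≤ ((j' - j : ℕ):ℝ) := le_trans (Nat.le_ceil M) (by exact_mod_cast hcon)
  have hg := u_growth u M hM hpos hratio j (j' - j)
  rw [show j + (j' - j) = j' by omega] at hg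
  have h2u : 2 * u j ≤ u j' := by
    have hd : (1:ℝ) ≤ ((j'-j:ℕ):ℝ)/M := (one_le_div hM0).mpr hMd
    nlinarith [(hpos j).le, hg]
  obtain ⟨hn1, hlo, -⟩ := lvl_bracket u s (hu1 j)
  obtain ⟨-, -, hhi⟩ := lvl_bracket u s (hu1 j')
  rw [h1] at hn1 hlo; rw [h2] at hhi
  have hpow : (2:ℝ)^n = 2 * 2^(n-1) := by
    rw [← pow_succ']
    congr 1
    omega
  have he : 0 < eps s := eps_pos s
  nlinarith [hlo, hhi, h2u]

end Growth

/-! ### Structural lemmas about `S` -/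

lemma card_children (n : ℕ) :
    ((S u s n).biUnion (fun k => {2*k, 2*k+1})).card = 2 * (S u s n).card := by
  rw [Finset.card_biUnion]
  · have h2 : ∀ k ∈ S u s n, ({2*k, 2*k+1} : Finset ℕ).card = 2 := by
      intro k _
      rw [Finset.card_insert_of_notMem (by simp only [Finset.mem_singleton]; omega),
        Finset.card_singleton]
    rw [Finset.sum_congr rfl h2, Finset.sum_const, smul_eq_mul, mul_comm]
  · intro k _ k' _ hkk
    simp only [Finset.disjoint_left, Finset.mem_insert, Finset.mem_singleton]
    omega

open Classical in
lemma mem_S_succ {n k : ℕ} :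
    k ∈ S u s (n+1) ↔ (k ∈ (S u s n).biUnion (fun k => {2*k, 2*k+1})) ∧ ¬ badp u s (n+1) k := by
  rw [S_succ]; exact Finset.mem_filter

lemma mem_children {n k : ℕ} :
    k ∈ (S u s n).biUnion (fun k => {2*k, 2*k+1}) ↔ ∃ k' ∈ S u s n, k = 2*k' ∨ k = 2*k'+1 := by
  simp [Finset.mem_biUnion]

lemma parent_mem {n k : ℕ} (h : k ∈ S u s (n+1)) : k / 2 ∈ S u s n := by
  rw [mem_S_succ] at h
  obtain ⟨k', hk', hor⟩ := (mem_children u s).mp h.1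
  have hd : k / 2 = k' := by omega
  rwa [hd]

lemma ancestor_mem : ∀ (i n k : ℕ), k ∈ S u s (n + i) → k / 2^i ∈ S u s n := by
  intro i
  induction i with
  | zero => intro n k h; simpa using h
  | succ i ih =>
      intro n k h
      rw [show n + (i+1) = (n+i) + 1 by omega] at h
      have h2 := ih n (k/2) (parent_mem u s h)
      rw [show k / 2 / 2^i = k / 2^(i+1) by rw [Nat.div_div_eq_div_mul]; ring_nf] at h2
      exact h2

/-! ### The fiber bound -/

lemma fiber_bound {j n K : ℕ} (hu : 1 ≤ u j) (hs1 : 1 ≤ s) (hj : lvl u s j = n) :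
    ∃ T : Finset ℕ, T.card ≤ 10 ∧ ∀ k, meets u s n j k → k / 2^s = K → k ∈ T := by
  obtain ⟨hn, hlo, hhi⟩ := lvl_bracket u s hu
  rw [hj] at hn hlo hhi
  have hupos : (0:ℝ) < u j := lt_of_lt_of_le one_pos hu
  have hε : 0 < eps s := eps_pos s
  have hε2 : eps s * 2^s = 1 := eps_mul s
  have hεhalf : eps s ≤ 1/2 := by
    unfold eps
    rw [inv_le_comm₀ (by positivity) (by norm_num)]
    norm_num
    calc (2:ℝ) = 2^1 := (pow_one 2).symm
      _ ≤ 2^s := pow_le_pow_right₀ one_le_two hs1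
  obtain ⟨ε, hεdef⟩ : ∃ e:ℝ, e = eps s := ⟨_, rfl⟩
  rw [← hεdef] at hε hε2 hεhalf hlo hhi
  have h2n : (0:ℝ) < 2^n := by positivity
  have hpow : (2:ℝ)^n = 2 * 2^(n-1) := by
    rw [← pow_succ']
    congr 1
    omega
  obtain ⟨lo, hlodef⟩ : ∃ l:ℝ, l = (K:ℝ) * 2^s / 2^n * u j - ε := ⟨_, rfl⟩
  obtain ⟨Bp, hBdef⟩ : ∃ B:ℤ→ℝ, B = fun p:ℤ => ((p:ℝ) - ε) * 2^n / u j - 1 := ⟨_, rfl⟩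
  refine ⟨((Finset.Ico (⌊lo⌋+1) (⌊lo⌋+3)).biUnion
      (fun p => Finset.Ico (⌊Bp p⌋+1) (⌊Bp p⌋+6))).image Int.toNat, ?_, ?_⟩
  · refine le_trans Finset.card_image_le (le_trans Finset.card_biUnion_le ?_)
    have hc5 : ∀ p ∈ Finset.Ico (⌊lo⌋+1) (⌊lo⌋+3), (Finset.Ico (⌊Bp p⌋+1) (⌊Bp p⌋+6)).card = 5 := by
      intro p _
      rw [Int.card_Ico]
      omega
    rw [Finset.sum_congr rfl hc5, Finset.sum_const, Int.card_Ico]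
    simp
  · intro k hk hK
    obtain ⟨x, hx, p, hp⟩ := hk
    rw [Set.mem_Icc] at hx
    rw [abs_lt, ← hεdef] at hp
    have hKk : ((K:ℝ) * 2^s) ≤ k := by
      have h0 : K * 2^s ≤ k := by rw [← hK]; exact Nat.div_mul_le_self k (2^s)
      exact_mod_cast h0
    have hkK : ((k:ℝ) + 1) ≤ ((K:ℝ)+1) * 2^s := by
      have h2 := Nat.mod_add_div k (2^s)
      have h3 : k % 2^s < 2^s := Nat.mod_lt _ (by positivity)
      rw [hK] at h2
      have h1 : k + 1 ≤ (K+1) * 2^s := by nlinarith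
      exact_mod_cast h1
    have e1 : (K:ℝ)*2^s/2^n ≤ (k:ℝ)/2^n := by gcongr
    have e2 : (k:ℝ)/2^n ≤ x := hx.1
    have e3 : x ≤ ((k:ℝ)+1)/2^n := hx.2
    have e4 : ((k:ℝ)+1)/2^n ≤ ((K:ℝ)+1)*2^s/2^n := by gcongr
    have hxu1 : (K:ℝ)*2^s/2^n * u j ≤ x * u j :=
      mul_le_mul_of_nonneg_right (e1.trans e2) hupos.le
    have hxu2 : x * u j ≤ ((K:ℝ)+1)*2^s/2^n * u j :=
      mul_le_mul_of_nonneg_right (e3.trans e4) hupos.le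
    have hxu3 : x * u j ≤ ((k:ℝ)+1)/2^n * u j := mul_le_mul_of_nonneg_right e3 hupos.le
    have hxu4 : (k:ℝ)/2^n * u j ≤ x * u j := mul_le_mul_of_nonneg_right e2 hupos.le
    have hgap : ((K:ℝ)+1)*2^s/2^n * u j ≤ (K:ℝ)*2^s/2^n * u j + 1 := by
      have hd : ((K:ℝ)+1)*2^s/2^n * u j - (K:ℝ)*2^s/2^n * u j = 2^s/2^n * u j := by ring
      have h5 : (2:ℝ)^s/2^n * u j ≤ 1 := by
        have h6 : (2:ℝ)^s/2^n * u j ≤ 2^s/2^n * (ε*2^n) :=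
          mul_le_mul_of_nonneg_left hhi.le (by positivity)
        have h7 : (2:ℝ)^s/2^n * (ε*2^n) = ε * 2^s := by field_simp
        rw [h7] at h6
        linarith [hε2]
      linarith
    -- p is pinned down
    have hp1 : lo < (p:ℝ) := by
      rw [hlodef]
      linarith [hxu1, hp.2]
    have hp2 : (p:ℝ) < lo + 2 := by
      rw [hlodef]
      linarith [hxu2, hgap, hp.1]
    have hpmem : p ∈ Finset.Ico (⌊lo⌋+1) (⌊lo⌋+3) := by
      rw [Finset.mem_Ico]
      constructor
      · have : ⌊lo⌋ < p := Int.floor_lt.mpr hp1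
        omega
      · have h8 : (p:ℝ) < (⌊lo⌋:ℝ) + 3 := lt_of_lt_of_le hp2 (by linarith [Int.lt_floor_add_one lo])
        exact_mod_cast h8
    -- k is pinned down
    have hk1 : Bp p < (k:ℝ) := by
      rw [hBdef]
      show ((p:ℝ) - ε) * 2^n / u j - 1 < (k:ℝ)
      have h6 : (p:ℝ) - ε < ((k:ℝ)+1)/2^n * u j := by linarith [hp.1, hxu3]
      have h9 := mul_lt_mul_of_pos_right h6 h2n
      have hfe : ((k:ℝ)+1)/2^n * u j * 2^n = ((k:ℝ)+1) * u j := by field_simp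
      rw [hfe] at h9
      have h10 : ((p:ℝ) - ε) * 2^n / u j < (k:ℝ) + 1 := by
        rw [div_lt_iff₀ hupos]
        linarith [h9]
      linarith
    have hk2 : (k:ℝ) < Bp p + 5 := by
      rw [hBdef]
      show (k:ℝ) < ((p:ℝ) - ε) * 2^n / u j - 1 + 5
      have h7 : (k:ℝ)/2^n * u j < (p:ℝ) + ε := by linarith [hp.2, hxu4]
      have h9 := mul_lt_mul_of_pos_right h7 h2n
      have hfe : (k:ℝ)/2^n * u j * 2^n = (k:ℝ) * u j := by field_simp
      rw [hfe] at h9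
      have hud : ε * 2^(n-1) ≤ u j := hlo
      have h13 : 2*(ε*2^n) ≤ 4 * u j := by
        rw [hpow]
        nlinarith [hud]
      have h11 : ((k:ℝ)-4) * u j < ((p:ℝ)-ε) * 2^n := by linarith [h9, h13]
      have h12 : (k:ℝ) - 4 < ((p:ℝ)-ε) * 2^n / u j := by
        rw [lt_div_iff₀ hupos]
        exact h11
      linarith
    have hkmem : (k:ℤ) ∈ Finset.Ico (⌊Bp p⌋+1) (⌊Bp p⌋+6) := by
      rw [Finset.mem_Ico]
      constructor
      · have : ⌊Bp p⌋ < (k:ℤ) := Int.floor_lt.mpr (by exact_mod_cast hk1)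
        omega
      · have h8 : ((k:ℤ):ℝ) < (⌊Bp p⌋:ℝ) + 6 := by
          push_cast
          linarith [Int.lt_floor_add_one (Bp p), hk2]
        exact_mod_cast h8
    refine Finset.mem_image.mpr ⟨(k:ℤ), Finset.mem_biUnion.mpr ⟨p, hpmem, hkmem⟩, by simp⟩

/-! ### Counting removals at one step -/

open Classical in
lemma meets_card {j n : ℕ} (hu1 : ∀ j, 1 ≤ u j) (hs1 : 1 ≤ s) (hn : s ≤ n)
    (hj : lvl u s j = n+1) :
    (((S u s n).biUnion (fun k => {2*k, 2*k+1})).filter (fun k => meets u s (n+1) j k)).card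
      ≤ 10 * (S u s (n+1-s)).card := by
  classical
  set Ch := (S u s n).biUnion (fun k => {2*k, 2*k+1}) with hCh
  set F := Ch.filter (fun k => meets u s (n+1) j k) with hF
  have himg : F.image (fun k => k / 2^s) ⊆ S u s (n+1-s) := by
    intro K hK
    obtain ⟨k, hkF, rfl⟩ := Finset.mem_image.mp hK
    have hch : k ∈ Ch := (Finset.mem_filter.mp hkF).1
    obtain ⟨k', hk', hor⟩ := (mem_children u s).mp hch
    have hpar : k / 2 ∈ S u s n := by
      have hd : k/2 = k' := by omega
      rwa [hd]
    have h2 := ancestor_mem u s (s-1) (n+1-s) (k/2)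
      (by rw [show (n+1-s)+(s-1) = n by omega]; exact hpar)
    rw [show k/2/2^(s-1) = k/2^s by
      rw [Nat.div_div_eq_div_mul, ← pow_succ']
      congr 2
      omega] at h2
    exact h2
  have hfib : ∀ K ∈ F.image (fun k => k / 2^s),
      (F.filter (fun k => k / 2^s = K)).card ≤ 10 := by
    intro K _
    obtain ⟨T, hT10, hTmem⟩ := fiber_bound u s (j := j) (n := n+1) (K := K) (hu1 j) hs1 hj
    refine le_trans (Finset.card_le_card ?_) hT10
    intro k hk
    rw [Finset.mem_filter] at hk
    exact hTmem k (Finset.mem_filter.mp hk.1).2 hk.2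
  have hbound := Finset.card_le_mul_card_image (f := fun k => k / 2^s) F 10 hfib
  exact le_trans hbound (Nat.mul_le_mul_left 10 (Finset.card_le_card himg))

lemma step_nobad {n : ℕ} (hu1 : ∀ j, 1 ≤ u j) (hn : n + 1 ≤ s) :
    (S u s (n+1)).card = 2 * (S u s n).card := by
  classical
  rw [S_succ]
  have hnone : ∀ k ∈ (S u s n).biUnion (fun k => {2*k, 2*k+1}), ¬ badp u s (n+1) k := by
    rintro k - ⟨j, hj, -⟩
    have := lvl_ge u s (hu1 j)
    omega
  rw [Finset.filter_true_of_mem hnone, card_children]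

lemma step_count {n : ℕ} (hM : 2 ≤ M) (hpos : ∀ j, 0 < u j)
    (hratio : ∀ j, (1 + 1/M) * u j ≤ u (j+1)) (hu1 : ∀ j, 1 ≤ u j)
    (hs1 : 1 ≤ s) (hn : s ≤ n) :
    2 * (S u s n).card ≤ (S u s (n+1)).card + 10 * ⌈M⌉₊ * (S u s (n+1-s)).card := by
  classical
  set Ch := (S u s n).biUnion (fun k => {2*k, 2*k+1}) with hCh
  have hsplit := Finset.card_filter_add_card_filter_not
    (s := Ch) (p := fun k => badp u s (n+1) k)
  have hScard : (S u s (n+1)).card = (Ch.filter (fun k => ¬ badp u s (n+1) k)).card := by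
    rw [S_succ]
  have hbad : (Ch.filter (fun k => badp u s (n+1) k)).card
      ≤ ⌈M⌉₊ * (10 * (S u s (n+1-s)).card) := by
    by_cases hex : ∃ j, lvl u s j = n+1
    · have hsub : Ch.filter (fun k => badp u s (n+1) k) ⊆
          (Finset.Ico (Nat.find hex) (Nat.find hex + ⌈M⌉₊)).biUnion
            (fun j => Ch.filter (fun k => lvl u s j = n+1 ∧ meets u s (n+1) j k)) := by
        intro k hk
        rw [Finset.mem_filter] at hk
        obtain ⟨hkC, j, hj, hm⟩ := hk
        refine Finset.mem_biUnion.mpr ⟨j, ?_, Finset.mem_filter.mpr ⟨hkC, hj, hm⟩⟩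
        rw [Finset.mem_Ico]
        have h1 : Nat.find hex ≤ j := Nat.find_min' hex hj
        have h2 : j - Nat.find hex < ⌈M⌉₊ :=
          window u s M hM hpos hratio hu1 h1 (Nat.find_spec hex) hj
        omega
      refine le_trans (Finset.card_le_card hsub) (le_trans Finset.card_biUnion_le ?_)
      have hterm : ∀ j ∈ Finset.Ico (Nat.find hex) (Nat.find hex + ⌈M⌉₊),
          (Ch.filter (fun k => lvl u s j = n+1 ∧ meets u s (n+1) j k)).card
            ≤ 10 * (S u s (n+1-s)).card := by
        intro j _
        by_cases hj : lvl u s j = n+1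
        · refine le_trans (Finset.card_le_card ?_) (meets_card u s hu1 hs1 hn hj)
          intro k hk
          rw [Finset.mem_filter] at hk ⊢
          exact ⟨hk.1, hk.2.2⟩
        · have hempty : Ch.filter (fun k => lvl u s j = n+1 ∧ meets u s (n+1) j k) = ∅ := by
            rw [Finset.filter_eq_empty_iff]
            rintro k - ⟨h1, -⟩
            exact hj h1
          rw [hempty]
          simp
      refine le_trans (Finset.sum_le_sum hterm) ?_
      rw [Finset.sum_const, Nat.card_Ico, smul_eq_mul]
      have : Nat.find hex + ⌈M⌉₊ - Nat.find hex = ⌈M⌉₊ := by omega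
      rw [this]
    · have hempty : Ch.filter (fun k => badp u s (n+1) k) = ∅ := by
        rw [Finset.filter_eq_empty_iff]
        rintro k - ⟨j, hj, -⟩
        exact hex ⟨j, hj⟩
      rw [hempty]
      simp
  have hchcard : Ch.card = 2 * (S u s n).card := card_children u s n
  have hassoc : 10 * ⌈M⌉₊ * (S u s (n+1-s)).card = ⌈M⌉₊ * (10 * (S u s (n+1-s)).card) := by ring
  rw [hScard, hassoc]
  omega

/-! ### The main induction -/

lemma growth (hM : 2 ≤ M) (hpos : ∀ j, 0 < u j)
    (hratio : ∀ j, (1 + 1/M) * u j ≤ u (j+1)) (hu1 : ∀ j, 1 ≤ u j)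
    (hs1 : 1 ≤ s) (hC1 : 40 * ⌈M⌉₊ * s ≤ 2^s) :
    ∀ n, (2 - 1/(s:ℝ)) * (S u s n).card ≤ (S u s (n+1)).card := by
  intro n
  induction n using Nat.strong_induction_on with
  | _ n ih =>
  have hs0 : (0:ℝ) < s := by exact_mod_cast hs1
  have hsinv : 1/(s:ℝ) ≤ 1 := by
    rw [div_le_one hs0]
    exact_mod_cast hs1
  have hsinv0 : 0 < 1/(s:ℝ) := by positivity
  have hθ1 : 1 ≤ (2 - 1/(s:ℝ)) := by linarith
  have hθ0 : 0 ≤ (2 - 1/(s:ℝ)) := by linarith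
  by_cases hcase : n + 1 ≤ s
  · rw [step_nobad u s hu1 hcase]
    have hc0 : (0:ℝ) ≤ ((S u s n).card : ℝ) := Nat.cast_nonneg _
    push_cast
    nlinarith
  · have hn : s ≤ n := by omega
    have chain : ∀ i, (n+1-s) + i ≤ n →
        (2 - 1/(s:ℝ))^i * ((S u s (n+1-s)).card:ℝ) ≤ ((S u s ((n+1-s)+i)).card : ℝ) := by
      intro i
      induction i with
      | zero => simp
      | succ i ih2 =>
          intro hle
          have h2 := ih2 (by omega)
          have h3 := ih ((n+1-s) + i) (by omega)
          have h4 : (2 - 1/(s:ℝ))^(i+1) * ((S u s (n+1-s)).card:ℝ)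
              = (2 - 1/(s:ℝ)) * ((2 - 1/(s:ℝ))^i * ((S u s (n+1-s)).card:ℝ)) := by ring
          rw [h4, show (n+1-s) + (i+1) = ((n+1-s)+i)+1 by omega]
          calc (2 - 1/(s:ℝ)) * ((2 - 1/(s:ℝ))^i * ((S u s (n+1-s)).card:ℝ))
              ≤ (2 - 1/(s:ℝ)) * ((S u s ((n+1-s)+i)).card : ℝ) :=
                mul_le_mul_of_nonneg_left h2 hθ0
            _ ≤ _ := h3
    have hchain := chain (s-1) (by omega)
    rw [show (n+1-s) + (s-1) = n by omega] at hchain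
    -- Bernoulli: (2 - 1/s)^(s-1) ≥ 2^s / 4
    have hbern : (2:ℝ)^s / 4 ≤ (2 - 1/(s:ℝ))^(s-1) := by
      have hfact : (2 - 1/(s:ℝ)) = 2 * (1 - 1/(2*s)) := by field_simp
      have hb := one_add_mul_le_pow (a := -(1/(2*(s:ℝ)))) (by
          have : 0 < 1/(2*(s:ℝ)) := by positivity
          linarith) (s-1)
      have hcast : ((s-1:ℕ):ℝ) = (s:ℝ) - 1 := by
        push_cast [Nat.cast_sub hs1]
        ring
      rw [hcast] at hb
      have hhalf : (1:ℝ)/2 ≤ 1 + ((s:ℝ)-1) * -(1/(2*s)) := by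
        rw [div_le_iff₀ (by norm_num : (0:ℝ) < 2)]
        have he : (1 + ((s:ℝ)-1) * -(1/(2*s))) * 2 = 2 - ((s:ℝ)-1)/s := by
          field_simp
          ring
        rw [he]
        have : ((s:ℝ)-1)/s ≤ 1 := by
          rw [div_le_one hs0]
          linarith
        linarith
      have hmono : (1:ℝ)/2 ≤ (1 + -(1/(2*(s:ℝ))))^(s-1) := le_trans hhalf hb
      have hp2 : (2:ℝ)^s = 2 * 2^(s-1) := by
        rw [← pow_succ']
        congr 1
        omega
      rw [hfact, mul_pow]
      have h2p : (0:ℝ) ≤ 2^(s-1) := by positivity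
      calc (2:ℝ)^s/4 = 2^(s-1) * (1/2) := by rw [hp2]; ring
        _ ≤ 2^(s-1) * (1 + -(1/(2*(s:ℝ))))^(s-1) := mul_le_mul_of_nonneg_left hmono h2p
        _ = 2^(s-1) * (1 - 1/(2*(s:ℝ)))^(s-1) := by ring_nf
    have hstep := step_count u s M hM hpos hratio hu1 hs1 hn
    have hstepR : 2 * (((S u s n).card:ℝ)) ≤ ((S u s (n+1)).card : ℝ)
        + 10 * (⌈M⌉₊:ℝ) * ((S u s (n+1-s)).card : ℝ) := by exact_mod_cast hstep
    have hcm0 : (0:ℝ) ≤ ((S u s (n+1-s)).card : ℝ) := Nat.cast_nonneg _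
    have hcn0 : (0:ℝ) ≤ ((S u s n).card : ℝ) := Nat.cast_nonneg _
    have h2s0 : (0:ℝ) < 2^s := by positivity
    have h4 : (2:ℝ)^s/4 * ((S u s (n+1-s)).card : ℝ) ≤ ((S u s n).card : ℝ) :=
      le_trans (mul_le_mul_of_nonneg_right hbern hcm0) hchain
    have hC1R : 40 * (⌈M⌉₊:ℝ) * s ≤ 2^s := by exact_mod_cast hC1
    have hw0 : (0:ℝ) ≤ (⌈M⌉₊:ℝ) := Nat.cast_nonneg _
    have hm_bound : 10 * (⌈M⌉₊:ℝ) * ((S u s (n+1-s)).card : ℝ)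
        ≤ (1/(s:ℝ)) * ((S u s n).card : ℝ) := by
      have hcm : ((S u s (n+1-s)).card : ℝ) ≤ 4/2^s * ((S u s n).card : ℝ) := by
        have h5 := mul_le_mul_of_nonneg_left h4 (le_of_lt (show (0:ℝ) < 4/2^s by positivity))
        have h6 : 4/(2:ℝ)^s * ((2:ℝ)^s/4 * ((S u s (n+1-s)).card : ℝ))
            = ((S u s (n+1-s)).card : ℝ) := by
          field_simp
        rw [h6] at h5
        exact h5
      have h7 : 10 * (⌈M⌉₊:ℝ) * ((S u s (n+1-s)).card : ℝ)
          ≤ 10 * (⌈M⌉₊:ℝ) * (4/2^s * ((S u s n).card : ℝ)) := by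
        apply mul_le_mul_of_nonneg_left hcm
        positivity
      have h8 : 10 * (⌈M⌉₊:ℝ) * (4/2^s * ((S u s n).card : ℝ))
          ≤ (1/(s:ℝ)) * ((S u s n).card : ℝ) := by
        have h9 : 10 * (⌈M⌉₊:ℝ) * (4/2^s) ≤ 1/(s:ℝ) := by
          have he : 10 * (⌈M⌉₊:ℝ) * (4/2^s) = (40 * (⌈M⌉₊:ℝ))/2^s := by ring
          rw [he, div_le_div_iff₀ h2s0 hs0]
          nlinarith [hC1R]
        calc 10 * (⌈M⌉₊:ℝ) * (4/2^s * ((S u s n).card : ℝ))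
            = (10 * (⌈M⌉₊:ℝ) * (4/2^s)) * ((S u s n).card : ℝ) := by ring
          _ ≤ (1/(s:ℝ)) * ((S u s n).card : ℝ) := mul_le_mul_of_nonneg_right h9 hcn0
      exact le_trans h7 h8
    linarith [hstepR, hm_bound]

lemma card_ge_one (hM : 2 ≤ M) (hpos : ∀ j, 0 < u j)
    (hratio : ∀ j, (1 + 1/M) * u j ≤ u (j+1)) (hu1 : ∀ j, 1 ≤ u j)
    (hs1 : 1 ≤ s) (hC1 : 40 * ⌈M⌉₊ * s ≤ 2^s) :
    ∀ n, 1 ≤ (S u s n).card := by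
  intro n
  induction n with
  | zero => simp [S]
  | succ n ihn =>
      have hg := growth u s M hM hpos hratio hu1 hs1 hC1 n
      have hs0 : (0:ℝ) < s := by exact_mod_cast hs1
      have hsinv : 1/(s:ℝ) ≤ 1 := by
        rw [div_le_one hs0]
        exact_mod_cast hs1
      have h1 : (1:ℝ) ≤ ((S u s n).card : ℝ) := by exact_mod_cast ihn
      have h2 : (1:ℝ) ≤ ((S u s (n+1)).card : ℝ) := by nlinarith
      exact_mod_cast h2

/-! ### Extraction of α -/

theorem exists_alpha (hM : 2 ≤ M) (hpos : ∀ j, 0 < u j)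
    (hratio : ∀ j, (1 + 1/M) * u j ≤ u (j+1)) (hu1 : ∀ j, 1 ≤ u j)
    (hs1 : 1 ≤ s) (hC1 : 40 * ⌈M⌉₊ * s ≤ 2^s) :
    ∃ α : ℝ, ∀ (j : ℕ) (p : ℤ), eps s ≤ |α * u j - p| := by
  classical
  set C : ℕ → Set ℝ := fun n => ⋃ k ∈ S u s n, Set.Icc ((k:ℝ)/2^n) ((k+1)/2^n) with hC
  have hnested : ∀ n, C (n+1) ⊆ C n := by
    intro n x hx
    simp only [hC, Set.mem_iUnion, exists_prop] at hx ⊢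
    obtain ⟨k, hkS, hxk⟩ := hx
    refine ⟨k/2, parent_mem u s hkS, ?_⟩
    rw [Set.mem_Icc] at hxk ⊢
    have h1 : ((k/2 : ℕ):ℝ) * 2 ≤ (k:ℝ) := by exact_mod_cast Nat.div_mul_le_self k 2
    have h2 : ((k:ℝ) + 1) ≤ ((k/2 : ℕ):ℝ) * 2 + 2 := by
      have : k + 1 ≤ (k/2) * 2 + 2 := by omega
      exact_mod_cast this
    have h2n : (0:ℝ) < 2^n := by positivity
    have h2n1 : (0:ℝ) < 2^(n+1) := by positivity
    have hps : (2:ℝ)^(n+1) = 2^n * 2 := pow_succ 2 n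
    constructor
    · have hle : ((k/2 : ℕ):ℝ)/2^n ≤ (k:ℝ)/2^(n+1) := by
        rw [div_le_div_iff₀ h2n h2n1, hps]
        nlinarith
      linarith [hxk.1]
    · have hle : ((k:ℝ)+1)/2^(n+1) ≤ (((k/2 : ℕ):ℝ)+1)/2^n := by
        rw [div_le_div_iff₀ h2n1 h2n, hps]
        nlinarith
      have := hxk.2
      push_cast at this ⊢
      linarith
  have hne : ∀ n, (C n).Nonempty := by
    intro n
    have hcard := card_ge_one u s M hM hpos hratio hu1 hs1 hC1 n
    obtain ⟨k, hk⟩ := Finset.card_pos.mp hcard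
    refine ⟨(k:ℝ)/2^n, ?_⟩
    simp only [hC, Set.mem_iUnion, exists_prop]
    refine ⟨k, hk, ?_⟩
    rw [Set.mem_Icc]
    constructor
    · exact le_refl _
    · gcongr
      linarith
  have hcl : ∀ n, IsClosed (C n) := by
    intro n
    exact (S u s n).finite_toSet.isClosed_biUnion (fun k _ => isClosed_Icc)
  have hcpt : IsCompact (C 0) :=
    (S u s 0).finite_toSet.isCompact_biUnion (fun k _ => isCompact_Icc)
  obtain ⟨α, hα⟩ := IsCompact.nonempty_iInter_of_sequence_nonempty_isCompact_isClosed
    C hnested hne hcpt hcl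
  refine ⟨α, fun j p => ?_⟩
  have hmem : α ∈ C (lvl u s j) := Set.mem_iInter.mp hα _
  have hge : s + 1 ≤ lvl u s j := lvl_ge u s (hu1 j)
  obtain ⟨n', hn'⟩ : ∃ n', lvl u s j = n'+1 := ⟨lvl u s j - 1, by omega⟩
  rw [hn'] at hmem
  simp only [hC, Set.mem_iUnion, exists_prop] at hmem
  obtain ⟨k, hkS, hαk⟩ := hmem
  have hbad := ((mem_S_succ u s).mp hkS).2
  by_contra hcon
  push_neg at hcon
  exact hbad ⟨j, hn', α, hαk, p, hcon⟩

/-! ### Numerics: choice of s -/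

lemma choose_s (M : ℝ) (hM : 2 ≤ M) :
    ∃ s : ℕ, 1 ≤ s ∧ 40 * ⌈M⌉₊ * s ≤ 2^s ∧ (2:ℝ)^s ≤ 131072 * (M * Real.log M) := by
  have hM0 : (0:ℝ) < M := by linarith
  have hw2 : 2 ≤ ⌈M⌉₊ := by
    have h1 : (2:ℝ) ≤ (⌈M⌉₊:ℝ) := le_trans hM (Nat.le_ceil M)
    exact_mod_cast h1
  set w := ⌈M⌉₊ with hwdef
  set a := Nat.clog 2 w with hadef
  have ha1 : 1 ≤ a := Nat.clog_pos one_lt_two hw2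
  have haw : w ≤ 2^a := Nat.le_pow_clog one_lt_two w
  have haw2 : 2^a < 2*w := by
    have h1 : 2^(a-1) < w := Nat.pow_pred_clog_lt_self one_lt_two (by omega)
    have h2 : 2^a = 2 * 2^(a-1) := by
      rw [← pow_succ']
      congr 1
      omega
    omega
  set c := Nat.clog 2 (a+20) with hcdef
  have hc1 : a+20 ≤ 2^c := Nat.le_pow_clog one_lt_two _
  have hc2 : 2^c < 2*(a+20) := by
    have h1 : 2^(c-1) < a+20 := by
      have := Nat.pow_pred_clog_lt_self one_lt_two (x := a+20) (by omega)
      rw [← hcdef, Nat.pred_eq_sub_one] at this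
      exact this
    have hcpos : 1 ≤ c := Nat.clog_pos one_lt_two (by omega)
    have h2 : 2^c = 2 * 2^(c-1) := by
      rw [← pow_succ']
      congr 1
    omega
  have hcle : c ≤ a + 20 := by
    rw [hcdef, Nat.clog_le_iff_le_pow one_lt_two]
    exact Nat.lt_two_pow_self.le
  clear_value c a
  refine ⟨a + (c + 9), by omega, ?_, ?_⟩
  · -- 40 * w * s ≤ 2^s
    have hs2 : a + (c+9) ≤ 2*(a+20) := by omega
    have h2s : 2^(a + (c+9)) = 2^a * (2^c * 512) := by
      rw [pow_add, pow_add]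
      norm_num
    rw [h2s]
    calc 40 * w * (a + (c+9)) ≤ 40 * 2^a * (2*(a+20)) := by
          apply Nat.mul_le_mul (Nat.mul_le_mul_left 40 haw) hs2
      _ = 2^a * (80 * (a+20)) := by ring
      _ ≤ 2^a * ((a+20) * 512) := by
          apply Nat.mul_le_mul_left
          omega
      _ ≤ 2^a * (2^c * 512) := by
          apply Nat.mul_le_mul_left
          apply Nat.mul_le_mul_right
          exact hc1
  · -- real bound
    have hlog2 : (0.6931471803:ℝ) < Real.log 2 := Real.log_two_gt_d9
    have hlogM : Real.log 2 ≤ Real.log M := Real.log_le_log (by norm_num) hM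
    have hlogM0 : (0.6931471803:ℝ) < Real.log M := lt_of_lt_of_le hlog2 hlogM
    -- (2:ℝ)^a < 3*M
    have hwR : (w:ℝ) < M + 1 := Nat.ceil_lt_add_one hM0.le
    have h2aR : (2:ℝ)^a < 3*M := by
      have h1 : ((2^a : ℕ):ℝ) < 2*(w:ℝ) := by exact_mod_cast haw2
      push_cast at h1
      nlinarith
    -- a * log 2 ≤ 3 * log M
    have halog : (a:ℝ) * Real.log 2 ≤ 3 * Real.log M := by
      have h1 : (2:ℝ)^a ≤ M^3 := by nlinarith [h2aR, sq_nonneg (M-2)]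
      have h2 := Real.log_le_log (by positivity) h1
      rw [Real.log_pow, Real.log_pow] at h2
      push_cast at h2
      linarith
    -- 2^(a+c+9)
    have h2cR : (2:ℝ)^c < 2*((a:ℝ)+20) := by
      have h1 : ((2^c : ℕ):ℝ) < 2*((a:ℝ)+20) := by exact_mod_cast hc2
      push_cast at h1 ⊢
      linarith
    have hsplit : (2:ℝ)^(a + (c+9)) = 2^a * (2^c * 512) := by
      rw [pow_add, pow_add]
      norm_num
    have h2a0 : (0:ℝ) < 2^a := by positivity
    have h2c0 : (0:ℝ) < 2^c := by positivity
    have hbound : (2:ℝ)^(a + (c+9)) ≤ 3*M * (1024*((a:ℝ)+20)) := by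
      rw [hsplit]
      have hb1 : (2:ℝ)^c * 512 ≤ 1024*((a:ℝ)+20) := by nlinarith
      apply mul_le_mul h2aR.le hb1 (by positivity) (by nlinarith)
    have key : 3072*((a:ℝ)+20) ≤ 131072 * Real.log M := by
      have ha0 : (0:ℝ) ≤ (a:ℝ) := Nat.cast_nonneg a
      have h1 : (a:ℝ) * 0.6931471803 ≤ 3 * Real.log M := by nlinarith
      linarith
    calc (2:ℝ)^(a + (c+9)) ≤ 3*M * (1024*((a:ℝ)+20)) := hbound
      _ = M * (3072*((a:ℝ)+20)) := by ring
      _ ≤ M * (131072 * Real.log M) := by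
          apply mul_le_mul_of_nonneg_left key hM0.le
      _ = 131072 * (M * Real.log M) := by ring

end

end PS9

/-- Peres–Schlag's theorem on lacunary sequences. -/
theorem stmt9 : ∃ γ : ℝ, 0 < γ ∧ ∀ M : ℝ, 2 ≤ M → ∀ t : ℕ → ℝ,
    (∀ j, 0 < t j) → (∀ j, 1 + 1 / M ≤ t (j + 1) / t j) →
    ∃ α : ℝ, ∀ j, γ / (M * Real.log M) ≤ nint (α * t j) := by
  refine ⟨(131072:ℝ)⁻¹, by norm_num, ?_⟩
  intro M hM t htpos htrat
  have hM0 : (0:ℝ) < M := by linarith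
  have ht0 : 0 < t 0 := htpos 0
  set u : ℕ → ℝ := fun j => t j / t 0 with hu
  have hupos : ∀ j, 0 < u j := fun j => div_pos (htpos j) ht0
  have hratio : ∀ j, (1 + 1/M) * u j ≤ u (j+1) := by
    intro j
    have h := htrat j
    rw [le_div_iff₀ (htpos j)] at h
    show (1 + 1/M) * (t j / t 0) ≤ t (j+1) / t 0
    rw [← mul_div_assoc]
    gcongr
  have hu0 : u 0 = 1 := div_self ht0.ne'
  have hu1 : ∀ j, 1 ≤ u j := PS9.u_mono u M hM hupos hratio hu0
  obtain ⟨s, hs1, hC1, hC2⟩ := PS9.choose_s M hM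
  obtain ⟨α, hα⟩ := PS9.exists_alpha u s M hM hupos hratio hu1 hs1 hC1
  refine ⟨α / t 0, fun j => ?_⟩
  have hid : α / t 0 * t j = α * u j := by
    show α / t 0 * t j = α * (t j / t 0)
    field_simp
  rw [hid]
  have h1 := hα j (round (α * u j))
  have hMlog : 0 < M * Real.log M := mul_pos hM0 (Real.log_pos (by linarith))
  have h2 : (131072:ℝ)⁻¹ / (M * Real.log M) ≤ PS9.eps s := by
    have he : (131072:ℝ)⁻¹ / (M * Real.log M) = (131072 * (M * Real.log M))⁻¹ := by
      rw [mul_inv]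
      ring
    rw [he]
    unfold PS9.eps
    exact inv_anti₀ (by positivity) hC2
  exact le_trans h2 h1
end

section
/- There exists an absolute constant γ > 0 such that for every sequence of real numbers (η_q)_{q ≥ 1} there exists a real number θ with ‖q²θ − η_q‖ ≥ γ / (q log q) for every integer q ≥ 2. -/
open Filter

namespace PS13

attribute [local instance] Classical.propDecidable

noncomputable def gam : ℝ := 1/8192

def LL : ℕ → ℕ
  | 0 => 0
  | (j+1) => 91 * 2^j + 13

def RRq : ℕ → ℕ
  | 0 => 2
  | (j+1) => 2^(26 * 2^j)

noncomputable def cc (q : ℕ) : ℝ := gam / ((q:ℝ) * Real.log q)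

noncomputable def hh (s : ℕ) : ℝ := 1 / 2^(LL s)

def Iv (s k : ℕ) : Set ℝ := Set.Ico ((k:ℝ) * hh s) (((k:ℝ)+1) * hh s)

noncomputable def AA (η : ℕ → ℝ) : ℕ → Finset ℕ
  | 0 => {0}
  | (j+1) => (Finset.range (2^(LL (j+1)))).filter (fun k =>
      k / 2^(LL (j+1) - LL j) ∈ AA η j ∧
      ∀ q ∈ Finset.Ico (RRq j) (RRq (j+1)), ∀ y ∈ Iv (j+1) k,
        cc q ≤ nint ((q:ℝ)^2 * y - η q))

def UU (η : ℕ → ℝ) (s : ℕ) : Set ℝ := ⋃ k ∈ AA η s, Iv s k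

noncomputable def vv (η : ℕ → ℝ) (s : ℕ) : ℝ := ((AA η s).card : ℝ) * hh s

lemma gam_pos : 0 < gam := by norm_num [gam]

lemma hh_pos (s : ℕ) : 0 < hh s := by unfold hh; positivity

lemma LL_mono (j : ℕ) : LL j ≤ LL (j+1) := by
  cases j with
  | zero => simp [LL]
  | succ i =>
    show 91 * 2^i + 13 ≤ 91 * 2^(i+1) + 13
    have : (2:ℕ)^i ≤ 2^(i+1) := Nat.pow_le_pow_right (by norm_num) (by omega)
    omega

lemma RRq_two_le (j : ℕ) : 2 ≤ RRq j := by
  cases j with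
  | zero => simp [RRq]
  | succ i =>
    show 2 ≤ 2^(26 * 2^i)
    calc 2 = 2^1 := rfl
    _ ≤ 2^(26 * 2^i) := Nat.pow_le_pow_right (by norm_num) (by have : 0 < 2^i := Nat.pow_pos (show 0 < 2 by norm_num); omega)

lemma RRq_mono (j : ℕ) : RRq j ≤ RRq (j+1) := by
  cases j with
  | zero =>
    show 2 ≤ 2^(26 * 2^0)
    calc 2 = 2^1 := rfl
    _ ≤ _ := Nat.pow_le_pow_right (by norm_num) (by norm_num)
  | succ i =>
    show 2^(26 * 2^i) ≤ 2^(26 * 2^(i+1))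
    exact Nat.pow_le_pow_right (by norm_num) (by
      have : (2:ℕ)^i ≤ 2^(i+1) := Nat.pow_le_pow_right (by norm_num) (by omega)
      omega)

/-- `nint` is at most the distance to any integer. -/
lemma nint_le_abs (x : ℝ) (m : ℤ) : nint x ≤ |x - (m:ℝ)| := by
  unfold nint
  rcases eq_or_ne (round x) m with h | h
  · rw [h]
  · have h1 : |x - round x| ≤ 1/2 := abs_sub_round x
    have h2 : (1:ℝ) ≤ |(round x : ℝ) - (m:ℝ)| := by
      have : (1:ℤ) ≤ |round x - m| := Int.one_le_abs (sub_ne_zero.mpr h)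
      calc (1:ℝ) = ((1:ℤ):ℝ) := by norm_num
      _ ≤ ((|round x - m| : ℤ) : ℝ) := by exact_mod_cast this
      _ = |(round x : ℝ) - (m:ℝ)| := by push_cast; norm_num
    have h3 : |(round x:ℝ) - m| ≤ |round x - x| + |x - m| := abs_sub_le _ _ _
    have h4 : |(round x:ℝ) - x| = |x - round x| := abs_sub_comm _ _
    linarith
  
lemma nint_lt_iff {x c : ℝ} : nint x < c ↔ ∃ m : ℤ, |x - (m:ℝ)| < c := by
  constructor
  · intro h; exact ⟨round x, h⟩
  · rintro ⟨m, hm⟩; exact lt_of_le_of_lt (nint_le_abs x m) hm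

lemma isOpen_bad (a b c : ℝ) : IsOpen {x : ℝ | nint (a * x - b) < c} := by
  have : {x : ℝ | nint (a * x - b) < c}
      = (fun x : ℝ => a * x - b) ⁻¹' (⋃ m : ℤ, Set.Ioo ((m:ℝ) - c) ((m:ℝ) + c)) := by
    ext x
    simp only [Set.mem_setOf_eq, Set.mem_preimage, Set.mem_iUnion, Set.mem_Ioo]
    rw [nint_lt_iff]
    constructor
    · rintro ⟨m, hm⟩; exact ⟨m, by rw [abs_lt] at hm; constructor <;> linarith [hm.1, hm.2]⟩
    · rintro ⟨m, h1, h2⟩; exact ⟨m, by rw [abs_lt]; constructor <;> linarith⟩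
  rw [this]
  exact (isOpen_iUnion fun m => isOpen_Ioo).preimage (by continuity)

lemma AA_subset_range (η : ℕ → ℝ) (s : ℕ) : AA η s ⊆ Finset.range (2^(LL s)) := by
  cases s with
  | zero => intro k hk; simp [AA, LL] at hk ⊢; omega
  | succ j => intro k hk; rw [AA] at hk; exact Finset.mem_of_mem_filter k hk


lemma Iv_disjoint {s : ℕ} : Set.PairwiseDisjoint (↑(Finset.range (2^(LL s)))) (Iv s) := by
  intro k _ k' _ hne
  have key : ∀ a b : ℕ, a < b → Disjoint (Iv s a) (Iv s b) := by
    intro a b hab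
    apply Set.disjoint_left.mpr
    rintro x ⟨h1, h2⟩ ⟨h3, h4⟩
    have hba : ((a:ℝ)+1) ≤ (b:ℝ) := by exact_mod_cast hab
    have := hh_pos s
    have : ((a:ℝ)+1) * hh s ≤ (b:ℝ) * hh s := by gcongr
    linarith
  rcases lt_or_gt_of_ne hne with h | h
  · exact key _ _ h
  · exact (key _ _ h).symm

lemma Iv_subset_unit {s k : ℕ} (hk : k < 2^(LL s)) : Iv s k ⊆ Set.Ico (0:ℝ) 1 := by
  rintro x ⟨h1, h2⟩
  constructor
  · have := hh_pos s
    nlinarith [Nat.cast_nonneg (α := ℝ) k]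
  · have hk' : ((k:ℝ)+1) ≤ 2^(LL s) := by exact_mod_cast hk
    have h3 : ((k:ℝ)+1) * hh s ≤ (2:ℝ)^(LL s) * hh s := by
      have := hh_pos s; gcongr
    have h4 : (2:ℝ)^(LL s) * hh s = 1 := by
      unfold hh; field_simp
    linarith

lemma UU_subset_unit (η : ℕ → ℝ) (s : ℕ) : UU η s ⊆ Set.Ico (0:ℝ) 1 := by
  intro x hx
  simp only [UU, Set.mem_iUnion] at hx
  obtain ⟨k, hk, hx⟩ := hx
  exact Iv_subset_unit (Finset.mem_range.mp (AA_subset_range η s hk)) hx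

lemma pow_LL_succ (j : ℕ) : (2:ℝ)^(LL (j+1)) = 2^(LL j) * 2^(LL (j+1) - LL j) := by
  rw [← pow_add]
  congr 1
  have := LL_mono j
  omega

lemma Iv_child_subset {j k : ℕ} :
    Iv (j+1) k ⊆ Iv j (k / 2^(LL (j+1) - LL j)) := by
  set d := LL (j+1) - LL j
  rintro x ⟨h1, h2⟩
  have hd : (0:ℝ) < 2^d := by positivity
  have hhj : hh (j+1) * 2^d = hh j := by
    unfold hh
    rw [pow_LL_succ]
    have h1 : (0:ℝ) < 2^(LL j) := by positivity
    have h2 : (0:ℝ) < 2^(LL (j+1) - LL j) := by positivity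
    field_simp
    ring
  have hlow : (↑(k / 2^d) : ℝ) * 2^d ≤ (k:ℝ) := by
    exact_mod_cast Nat.cast_le.mpr (Nat.div_mul_le_self k (2^d))
  have hhigh : (k:ℝ) + 1 ≤ ((↑(k / 2^d) : ℝ) + 1) * 2^d := by
    have hint : (k:ℕ) + 1 ≤ (k / 2^d + 1) * 2^d := by
      have hmod := Nat.div_add_mod k (2^d)
      have hlt : k % 2^d < 2^d := Nat.mod_lt _ (by positivity)
      nlinarith [Nat.div_mul_le_self k (2^d)]
    exact_mod_cast hint
  constructor
  · have h0 := hh_pos (j+1)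
    calc (↑(k / 2^d):ℝ) * hh j = (↑(k / 2^d):ℝ) * 2^d * hh (j+1) := by rw [mul_assoc, mul_comm ((2:ℝ)^d), hhj]
    _ ≤ (k:ℝ) * hh (j+1) := by gcongr
    _ ≤ x := h1
  · have h0 := hh_pos (j+1)
    calc x < ((k:ℝ)+1) * hh (j+1) := h2
    _ ≤ ((↑(k / 2^d):ℝ) + 1) * 2^d * hh (j+1) := by gcongr
    _ = ((↑(k / 2^d):ℝ) + 1) * hh j := by rw [mul_assoc, mul_comm ((2:ℝ)^d), hhj]

lemma AA_succ_mem {η : ℕ → ℝ} {j k : ℕ} (hk : k ∈ AA η (j+1)) :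
    k ∈ Finset.range (2^(LL (j+1))) ∧ k / 2^(LL (j+1) - LL j) ∈ AA η j ∧
      ∀ q ∈ Finset.Ico (RRq j) (RRq (j+1)), ∀ y ∈ Iv (j+1) k,
        cc q ≤ nint ((q:ℝ)^2 * y - η q) := by
  rw [AA] at hk
  have h1 := Finset.mem_of_mem_filter k hk
  have h2 := (Finset.mem_filter.mp hk).2
  exact ⟨h1, h2.1, h2.2⟩

lemma UU_succ_subset (η : ℕ → ℝ) (j : ℕ) : UU η (j+1) ⊆ UU η j := by
  intro x hx
  simp only [UU, Set.mem_iUnion] at hx ⊢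
  obtain ⟨k, hk, hx⟩ := hx
  exact ⟨k / 2^(LL (j+1) - LL j), (AA_succ_mem hk).2.1, Iv_child_subset hx⟩

lemma UU_mono (η : ℕ → ℝ) {i j : ℕ} (h : i ≤ j) : UU η j ⊆ UU η i := by
  induction j with
  | zero => simp_all
  | succ n ih =>
    rcases Nat.lt_or_ge i (n+1) with h' | h'
    · exact (UU_succ_subset η n).trans (ih (by omega))
    · have : i = n+1 := by omega
      subst this; exact subset_rfl

lemma volU (η : ℕ → ℝ) (s : ℕ) : MeasureTheory.volume (UU η s) = ENNReal.ofReal (vv η s) := by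
  unfold UU vv
  rw [MeasureTheory.measure_biUnion_finset
      (Iv_disjoint.subset (by exact_mod_cast AA_subset_range η s))
      (fun k _ => measurableSet_Ico)]
  have : ∀ k ∈ AA η s, MeasureTheory.volume (Iv s k) = ENNReal.ofReal (hh s) := by
    intro k _
    unfold Iv
    rw [Real.volume_Ico]
    congr 1
    ring
  rw [Finset.sum_congr rfl this, Finset.sum_const, nsmul_eq_mul]
  rw [← ENNReal.ofReal_natCast, ← ENNReal.ofReal_mul (by positivity)]


lemma log_pos_of_two_le {q : ℕ} (hq : 2 ≤ q) : 0 < Real.log q :=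
  Real.log_pos (by exact_mod_cast hq)

lemma one_le_q_mul_log {q : ℕ} (hq : 2 ≤ q) : 1 ≤ (q:ℝ) * Real.log q := by
  have hq2 : (2:ℝ) ≤ (q:ℝ) := by exact_mod_cast hq
  have h2 : Real.log 2 ≤ Real.log q := Real.log_le_log (by norm_num) hq2
  have h4 : (1:ℝ) ≤ 2 * Real.log 2 := by
    have hl4 : (1:ℝ) ≤ Real.log 4 := by
      rw [Real.le_log_iff_exp_le (by norm_num)]
      have := Real.exp_one_lt_d9
      linarith
    have he : Real.log 4 = 2 * Real.log 2 := by
      rw [show (4:ℝ) = 2^2 by norm_num, Real.log_pow]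
      push_cast; ring
    linarith
  have hlog2 : 0 < Real.log 2 := Real.log_pos (by norm_num)
  nlinarith

lemma cc_pos {q : ℕ} (hq : 2 ≤ q) : 0 < cc q := by
  unfold cc
  have := log_pos_of_two_le hq
  have hq0 : (0:ℝ) < q := by positivity
  exact div_pos gam_pos (by positivity)

lemma cc_le_gam {q : ℕ} (hq : 2 ≤ q) : cc q ≤ gam := by
  unfold cc
  have h := one_le_q_mul_log hq
  calc gam / ((q:ℝ) * Real.log q) ≤ gam / 1 := by
        apply div_le_div_of_nonneg_left (le_of_lt gam_pos) (by norm_num) h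
  _ = gam := by norm_num

lemma pow26 (n : ℕ) (hn : 1 ≤ n) : 26 * n ≤ 2^(13 * n) := by
  induction n with
  | zero => omega
  | succ m ih =>
    rcases Nat.eq_zero_or_pos m with h | h
    · subst h; norm_num
    · have := ih h
      have h2 : 2^(13*m) + 26 ≤ 2^(13*m) + 2^(13*m) := by
        have : 26 ≤ 2^(13*m) := le_trans (by omega) this
        omega
      calc 26 * (m+1) = 26*m + 26 := by ring
      _ ≤ 2^(13*m) + 26 := by omega
      _ ≤ 2^(13*m) + 2^(13*m) := h2
      _ = 2^(13*m + 1) := by ring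
      _ ≤ 2^(13*(m+1)) := Nat.pow_le_pow_right (by norm_num) (by omega)

/-- Condition (ii): resolution at level `j+1` is finer than the bad-interval radius. -/
lemma cond_ii {j q : ℕ} (hq : 2 ≤ q) (hqR : q < RRq (j+1)) :
    (q:ℝ)^2 * hh (j+1) ≤ cc q := by
  have hlogq : 0 < Real.log q := log_pos_of_two_le hq
  have hq0 : (0:ℝ) < q := by positivity
  -- reduce to q^3 * log q ≤ 2^(91*2^j)
  have key : (q:ℝ)^3 * Real.log q ≤ 2^(91 * 2^j) := by
    have hq26 : (q:ℝ) ≤ 2^(26 * 2^j) := by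
      have : (q:ℕ) ≤ 2^(26*2^j) := le_of_lt hqR
      exact_mod_cast this
    have hlog : Real.log q ≤ 2^(13 * 2^j) := by
      have h1 : Real.log q ≤ Real.log (2^(26*2^j) : ℝ) := Real.log_le_log hq0 hq26
      have h2 : Real.log ((2:ℝ)^(26*2^j)) = (26*2^j : ℕ) * Real.log 2 := by
        rw [Real.log_pow]
      have h3 : Real.log 2 ≤ 1 := by
        have := Real.log_le_sub_one_of_pos (show (0:ℝ) < 2 by norm_num)
        linarith
      have h4 : ((26*2^j : ℕ):ℝ) ≤ 2^(13*2^j) := by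
        have := pow26 (2^j) (Nat.one_le_two_pow)
        exact_mod_cast this
      calc Real.log q ≤ (26*2^j : ℕ) * Real.log 2 := by rw [← h2]; exact h1
      _ ≤ ((26*2^j : ℕ):ℝ) * 1 := by
          apply mul_le_mul_of_nonneg_left h3 (by positivity)
      _ = ((26*2^j : ℕ):ℝ) := by ring
      _ ≤ 2^(13*2^j) := h4
    have hq3 : (q:ℝ)^3 ≤ (2:ℝ)^(78 * 2^j) := by
      calc (q:ℝ)^3 ≤ ((2:ℝ)^(26*2^j))^3 := by gcongr
      _ = (2:ℝ)^(78*2^j) := by rw [← pow_mul]; ring_nf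
    calc (q:ℝ)^3 * Real.log q ≤ (2:ℝ)^(78*2^j) * 2^(13*2^j) := by
          apply mul_le_mul hq3 hlog (le_of_lt hlogq) (by positivity)
    _ = (2:ℝ)^(91*2^j) := by rw [← pow_add]; ring_nf
  -- now conclude
  unfold hh cc gam
  have hL : LL (j+1) = 91*2^j + 13 := rfl
  rw [hL]
  rw [le_div_iff₀ (by positivity)]
  have h2 : (2:ℝ)^(91*2^j + 13) = 2^(91*2^j) * 2^13 := by rw [pow_add]
  have expand : (q:ℝ)^2 * ((q:ℝ) * Real.log q) = (q:ℝ)^3 * Real.log q := by ring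
  calc (q:ℝ)^2 * (1/2^(91*2^j+13)) * ((q:ℝ)*Real.log q)
      = ((q:ℝ)^3 * Real.log q) / 2^(91*2^j+13) := by ring
  _ ≤ ((2:ℝ)^(91*2^j)) / 2^(91*2^j+13) := by gcongr
  _ = 1/2^13 := by
      rw [h2]; field_simp
  _ = 1/8192 := by norm_num

/-- Condition (i'): intervals at level `j-1` are longer than the period `1/q²`. -/
lemma cond_i {j q : ℕ} (hq : 2 ≤ q) (hqR : RRq j ≤ q) :
    1 ≤ (q:ℝ)^2 * hh (j-1) := by
  have key : 2^(LL (j-1)) ≤ q^2 := by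
    match j with
    | 0 => simpa [LL] using Nat.one_le_two_pow.trans (Nat.pow_le_pow_left hq 2) |>.trans (le_refl _) |>.trans (by nlinarith)
    | 1 => show 2^(LL 0) ≤ q^2; simp [LL]; nlinarith
    | (i+2) =>
      show 2^(LL (i+1)) ≤ q^2
      have hqR' : 2^(26 * 2^(i+1)) ≤ q := hqR
      have h1 : 2^(52 * 2^(i+1)) ≤ q^2 := by
        calc 2^(52*2^(i+1)) = (2^(26*2^(i+1)))^2 := by rw [← pow_mul]; ring_nf
        _ ≤ q^2 := Nat.pow_le_pow_left hqR' 2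
      refine le_trans (Nat.pow_le_pow_right (by norm_num) ?_) h1
      show LL (i+1) ≤ 52 * 2^(i+1)
      show 91 * 2^i + 13 ≤ 52 * 2^(i+1)
      have h13 : 13 ≤ 13 * 2^i := by
        have : 1 ≤ 2^i := Nat.one_le_two_pow
        omega
      have : 52 * 2^(i+1) = 104 * 2^i := by ring
      omega
  have keyR : (2:ℝ)^(LL (j-1)) ≤ ((q:ℝ))^2 := by exact_mod_cast key
  unfold hh
  rw [mul_one_div, le_div_iff₀ (by positivity)]
  linarith


lemma inv_q_log_le {a q : ℕ} (ha : 2 ≤ a) (haq : a ≤ q) :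
    1 / ((q:ℝ) * Real.log q) ≤ (1 / Real.log a) * (Real.log q - Real.log (q-1:ℕ)) := by
  have hq2 : 2 ≤ q := le_trans ha haq
  have hq0 : (0:ℝ) < q := by positivity
  have hcast : ((q-1:ℕ):ℝ) = (q:ℝ) - 1 := by
    have : 1 ≤ q := by omega
    push_cast [Nat.cast_sub this]
    ring
  have hq1 : (1:ℝ) ≤ (q:ℝ) - 1 := by
    have : (2:ℝ) ≤ q := by exact_mod_cast hq2
    linarith
  have hstep : 1 / (q:ℝ) ≤ Real.log q - Real.log ((q-1:ℕ):ℝ) := by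
    rw [hcast]
    have hpos : (0:ℝ) < ((q:ℝ)-1)/(q:ℝ) := by positivity
    have := Real.log_le_sub_one_of_pos hpos
    rw [Real.log_div (by linarith) (by positivity)] at this
    have heq : ((q:ℝ)-1)/(q:ℝ) - 1 = -(1/(q:ℝ)) := by field_simp; ring
    rw [heq] at this
    linarith
  have hla : 0 < Real.log a := log_pos_of_two_le ha
  have hlaq : Real.log a ≤ Real.log q := by
    apply Real.log_le_log (by positivity)
    exact_mod_cast haq
  have hlq : 0 < Real.log q := lt_of_lt_of_le hla hlaq
  have hmono : Real.log q - Real.log ((q-1:ℕ):ℝ) ≤ Real.log q - Real.log ((q-1:ℕ):ℝ) := le_refl _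
  have hnn : 0 ≤ Real.log q - Real.log ((q-1:ℕ):ℝ) := le_trans (by positivity) hstep
  calc 1 / ((q:ℝ) * Real.log q) = (1/Real.log q) * (1/(q:ℝ)) := by
        rw [one_div_mul_eq_div]
        field_simp
  _ ≤ (1/Real.log q) * (Real.log q - Real.log ((q-1:ℕ):ℝ)) := by
        apply mul_le_mul_of_nonneg_left hstep (by positivity)
  _ ≤ (1/Real.log a) * (Real.log q - Real.log ((q-1:ℕ):ℝ)) := by
        apply mul_le_mul_of_nonneg_right _ hnn
        apply one_div_le_one_div_of_le hla hlaq

lemma telescope_log {a b : ℕ} (ha : 2 ≤ a) (hab : a ≤ b) :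
    (∑ q ∈ Finset.Ico a b, (Real.log q - Real.log (q-1:ℕ))) ≤ Real.log b := by
  set F : ℕ → ℝ := fun i => Real.log ((a - 1 + i : ℕ):ℝ) with hF
  have hsum : (∑ q ∈ Finset.Ico a b, (Real.log q - Real.log (q-1:ℕ)))
      = ∑ i ∈ Finset.range (b - a), (F (i+1) - F i) := by
    rw [Finset.sum_Ico_eq_sum_range]
    apply Finset.sum_congr rfl
    intro i _
    have h1 : a - 1 + (i+1) = a + i := by omega
    have h2 : a - 1 + i = (a + i) - 1 := by omega
    rw [hF]
    simp only [h1, h2]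
  rw [hsum, Finset.sum_range_sub]
  have hF0 : 0 ≤ F 0 := by
    rw [hF]
    simp only [Nat.add_zero]
    apply Real.log_nonneg
    have : 1 ≤ a - 1 := by omega
    exact_mod_cast this
  have hFn : F (b - a) ≤ Real.log b := by
    rw [hF]
    apply Real.log_le_log
    · have : 1 ≤ a - 1 + (b - a) := by omega
      have h0 : (0:ℕ) < a - 1 + (b-a) := by omega
      exact_mod_cast h0
    · have : a - 1 + (b - a) ≤ b := by omega
      exact_mod_cast this
  linarith

lemma log_RRq_ratio (j : ℕ) : Real.log (RRq (j+1)) ≤ 26 * Real.log (RRq j) := by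
  have hl2 : 0 ≤ Real.log 2 := Real.log_nonneg (by norm_num)
  cases j with
  | zero =>
    show Real.log (((2:ℕ)^(26 * 2^0) : ℕ):ℝ) ≤ 26 * Real.log ((2:ℕ):ℝ)
    rw [Nat.cast_pow, Real.log_pow]
    norm_num
  | succ i =>
    show Real.log (((2:ℕ)^(26 * 2^(i+1)) : ℕ):ℝ) ≤ 26 * Real.log (((2:ℕ)^(26 * 2^i) : ℕ):ℝ)
    rw [Nat.cast_pow, Nat.cast_pow, Real.log_pow, Real.log_pow]
    push_cast
    have : (26 * 2^(i+1) : ℕ) ≤ 26 * (26 * 2^i) := by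
      have : (2:ℕ)^(i+1) = 2 * 2^i := by ring
      nlinarith [Nat.one_le_two_pow (n := i)]
    have hcast : ((26 * 2^(i+1) : ℕ):ℝ) ≤ 26 * ((26 * 2^i : ℕ):ℝ) := by exact_mod_cast this
    push_cast at hcast ⊢
    nlinarith

lemma sum_cc (j : ℕ) : (∑ q ∈ Finset.Ico (RRq j) (RRq (j+1)), cc q) ≤ 26 * gam := by
  set a := RRq j
  set b := RRq (j+1)
  have ha : 2 ≤ a := RRq_two_le j
  have hab : a ≤ b := RRq_mono j
  have hla : 0 < Real.log a := log_pos_of_two_le ha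
  have step1 : (∑ q ∈ Finset.Ico a b, cc q)
      ≤ gam * (1 / Real.log a) * ∑ q ∈ Finset.Ico a b, (Real.log q - Real.log (q-1:ℕ)) := by
    rw [Finset.mul_sum]
    apply Finset.sum_le_sum
    intro q hq
    rw [Finset.mem_Ico] at hq
    have h := inv_q_log_le ha hq.1
    have : cc q = gam * (1 / ((q:ℝ) * Real.log q)) := by unfold cc; ring
    rw [this, mul_assoc]
    apply mul_le_mul_of_nonneg_left _ (le_of_lt gam_pos)
    calc 1 / ((q:ℝ) * Real.log q) ≤ (1 / Real.log a) * (Real.log q - Real.log (q-1:ℕ)) := h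
    _ = 1 / Real.log a * (Real.log ↑q - Real.log ↑(q - 1)) := rfl
  have step2 := telescope_log ha hab
  have step3 : Real.log b ≤ 26 * Real.log a := log_RRq_ratio j
  calc (∑ q ∈ Finset.Ico a b, cc q)
      ≤ gam * (1 / Real.log a) * ∑ q ∈ Finset.Ico a b, (Real.log q - Real.log (q-1:ℕ)) := step1
  _ ≤ gam * (1 / Real.log a) * Real.log b := by
      apply mul_le_mul_of_nonneg_left step2 (mul_nonneg gam_pos.le (by positivity))
  _ ≤ gam * (1 / Real.log a) * (26 * Real.log a) := by
      apply mul_le_mul_of_nonneg_left step3 (mul_nonneg gam_pos.le (by positivity))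
  _ = 26 * gam := by field_simp


open MeasureTheory in
lemma key {q : ℕ} (hq : 2 ≤ q) {c' h a : ℝ} (e : ℝ) (hc0 : 0 < c') (hc : c' ≤ 1/2)
    (hh0 : 0 < h) (hqh : 1 ≤ (q:ℝ)^2 * h) :
    volume ({x : ℝ | nint ((q:ℝ)^2 * x - e) < c'} ∩ Set.Ico a (a+h))
      ≤ ENNReal.ofReal (8 * c' * h) := by
  set Q := (q:ℝ)^2 with hQdef
  have hQ : 0 < Q := by positivity
  set m0 : ℤ := ⌈Q*a - e - c'⌉ with hm0
  set m1 : ℤ := ⌊Q*(a+h) - e + c'⌋ with hm1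
  have cover : {x : ℝ | nint (Q * x - e) < c'} ∩ Set.Ico a (a+h) ⊆
      ⋃ m ∈ Finset.Icc m0 m1, Set.Ioo ((e + m - c')/Q) ((e + m + c')/Q) := by
    rintro x ⟨hb, hxa, hxb⟩
    obtain ⟨m, hm⟩ := nint_lt_iff.mp hb
    rw [abs_lt] at hm
    have hax : Q * a ≤ Q * x := by nlinarith
    have hxb' : Q * x ≤ Q * (a+h) := by nlinarith
    refine Set.mem_iUnion₂.mpr ⟨m, ?_, ?_⟩
    · rw [Finset.mem_Icc, hm0, hm1]
      constructor
      · rw [Int.ceil_le]; linarith [hm.1, hm.2]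
      · rw [Int.le_floor]; linarith [hm.1, hm.2]
    · rw [Set.mem_Ioo]
      constructor
      · rw [div_lt_iff₀ hQ]; linarith [hm.1, hm.2]
      · rw [lt_div_iff₀ hQ]; linarith [hm.1, hm.2]
  have hcard : (((Finset.Icc m0 m1).card : ℕ) : ℝ) ≤ 3 * (Q*h) := by
    rw [Int.card_Icc]
    rcases le_or_gt (m1 + 1 - m0) 0 with hle | hlt
    · rw [Int.toNat_of_nonpos hle]
      push_cast
      nlinarith
    · have heq : ((m1 + 1 - m0).toNat : ℤ) = m1 + 1 - m0 := Int.toNat_of_nonneg (by omega)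
      have hfl : (m1:ℝ) ≤ Q*(a+h) - e + c' := Int.floor_le _
      have hcl : Q*a - e - c' ≤ (m0:ℝ) := Int.le_ceil _
      have : ((m1 + 1 - m0 : ℤ):ℝ) ≤ Q*h + 2*c' + 1 := by push_cast; nlinarith
      have h2 : ((m1+1-m0 : ℤ):ℝ) ≤ 3*(Q*h) := by nlinarith
      calc (((m1 + 1 - m0).toNat : ℕ):ℝ) = ((m1+1-m0 : ℤ):ℝ) := by exact_mod_cast heq
      _ ≤ 3*(Q*h) := h2
  calc volume ({x : ℝ | nint (Q * x - e) < c'} ∩ Set.Ico a (a+h))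
      ≤ volume (⋃ m ∈ Finset.Icc m0 m1, Set.Ioo ((e + m - c')/Q) ((e + m + c')/Q)) :=
        measure_mono cover
  _ ≤ ∑ m ∈ Finset.Icc m0 m1, volume (Set.Ioo ((e + m - c')/Q) ((e + m + c')/Q)) :=
        measure_biUnion_finset_le _ _
  _ = ∑ m ∈ Finset.Icc m0 m1, ENNReal.ofReal (2*c'/Q) := by
        apply Finset.sum_congr rfl
        intro m _
        rw [Real.volume_Ioo]
        congr 1
        field_simp
        ring
  _ = ((Finset.Icc m0 m1).card : ENNReal) * ENNReal.ofReal (2*c'/Q) := by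
        rw [Finset.sum_const, nsmul_eq_mul]
  _ = ENNReal.ofReal (((Finset.Icc m0 m1).card : ℝ)) * ENNReal.ofReal (2*c'/Q) := by
        rw [ENNReal.ofReal_natCast]
  _ ≤ ENNReal.ofReal (3*(Q*h)) * ENNReal.ofReal (2*c'/Q) := by
        exact mul_le_mul_left (ENNReal.ofReal_le_ofReal hcard) _
  _ = ENNReal.ofReal (3*(Q*h) * (2*c'/Q)) := (ENNReal.ofReal_mul (by positivity)).symm
  _ = ENNReal.ofReal (6*c'*h) := by
        congr 1
        field_simp
        ring
  _ ≤ ENNReal.ofReal (8*c'*h) := ENNReal.ofReal_le_ofReal (by nlinarith)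


lemma vv_nonneg (η : ℕ → ℝ) (s : ℕ) : 0 ≤ vv η s := by
  unfold vv
  have := hh_pos s
  positivity

open MeasureTheory in
lemma master (η : ℕ → ℝ) (j : ℕ) :
    vv η j ≤ vv η (j+1) + (13/256) * vv η (j-1) := by
  classical
  set p := j - 1 with hp
  have hpj : p ≤ j := Nat.sub_le j 1
  set Bad : ℕ → Set ℝ := fun q => {x | nint ((q:ℝ)^2*x - η q) < cc q + (q:ℝ)^2 * hh (j+1)}
    with hBad
  have cover : UU η j ⊆ UU η (j+1) ∪
      ⋃ q ∈ Finset.Ico (RRq j) (RRq (j+1)), (Bad q ∩ UU η p) := by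
    intro x hx
    by_cases hx1 : x ∈ UU η (j+1)
    · exact Or.inl hx1
    right
    have hxU : x ∈ UU η j := hx
    have hxunit := UU_subset_unit η j hx
    simp only [UU, Set.mem_iUnion] at hx
    obtain ⟨k0, hk0, hxk0⟩ := hx
    set d := LL (j+1) - LL j with hd
    set k := ⌊x * 2^(LL (j+1))⌋₊ with hk
    have hpowL : (0:ℝ) < 2^(LL (j+1)) := by positivity
    have hx0 : 0 ≤ x := hxunit.1
    have hxmul : 0 ≤ x * 2^(LL (j+1)) := by positivity
    have hfl1 : (k:ℝ) ≤ x * 2^(LL (j+1)) := Nat.floor_le hxmul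
    have hfl2 : x * 2^(LL (j+1)) < (k:ℝ) + 1 := Nat.lt_floor_add_one _
    have hxIv : x ∈ Iv (j+1) k := by
      constructor
      · rw [← div_le_iff₀ hpowL] at hfl1
        calc (k:ℝ) * hh (j+1) = (k:ℝ) / 2^(LL (j+1)) := by unfold hh; ring
        _ ≤ x := hfl1
      · rw [← lt_div_iff₀ hpowL] at hfl2
        calc x < ((k:ℝ)+1) / 2^(LL (j+1)) := hfl2
        _ = ((k:ℝ)+1) * hh (j+1) := by unfold hh; ring
    have hrel : hh j * 2^(LL (j+1)) = 2^d := by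
      unfold hh
      rw [pow_LL_succ]
      field_simp
      rw [hd]
    have hdiv : k / 2^d = k0 := by
      apply Nat.div_eq_of_lt_le
      · apply Nat.le_floor
        have h1 : (k0:ℝ) * hh j * 2^(LL (j+1)) ≤ x * 2^(LL (j+1)) :=
          mul_le_mul_of_nonneg_right hxk0.1 hpowL.le
        push_cast
        calc (k0:ℝ)*2^d = (k0:ℝ)*(hh j * 2^(LL (j+1))) := by rw [hrel]
        _ = (k0:ℝ)*hh j * 2^(LL (j+1)) := by ring
        _ ≤ x * 2^(LL (j+1)) := h1
      · rw [hk, Nat.floor_lt hxmul]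
        have h1 : x * 2^(LL (j+1)) < ((k0:ℝ)+1) * hh j * 2^(LL (j+1)) :=
          mul_lt_mul_of_pos_right hxk0.2 hpowL
        push_cast
        calc x * 2^(LL (j+1)) < ((k0:ℝ)+1) * hh j * 2^(LL (j+1)) := h1
        _ = ((k0:ℝ)+1)*(hh j * 2^(LL (j+1))) := by ring
        _ = ((k0:ℝ)+1)*2^d := by rw [hrel]
    have hkrange : k ∈ Finset.range (2^(LL (j+1))) := by
      rw [Finset.mem_range, hk, Nat.floor_lt hxmul]
      have hx1' : x < 1 := hxunit.2
      push_cast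
      nlinarith
    have hknot : k ∉ AA η (j+1) := by
      intro hmem
      exact hx1 (Set.mem_biUnion hmem hxIv)
    have hnot2 : ¬ (∀ q ∈ Finset.Ico (RRq j) (RRq (j+1)), ∀ y ∈ Iv (j+1) k,
        cc q ≤ nint ((q:ℝ)^2*y - η q)) := by
      intro hgood
      apply hknot
      rw [AA]
      exact Finset.mem_filter.mpr ⟨hkrange, ⟨hdiv ▸ hk0, hgood⟩⟩
    push_neg at hnot2
    obtain ⟨q, hqmem, y, hyIv, hbady⟩ := hnot2
    have hq2 : 2 ≤ q := le_trans (RRq_two_le j) (Finset.mem_Ico.mp hqmem).1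
    have hQ0 : (0:ℝ) < (q:ℝ)^2 := by
      have : (0:ℕ) < q := by omega
      positivity
    refine Set.mem_iUnion₂.mpr ⟨q, hqmem, ?_, UU_mono η hpj hxU⟩
    obtain ⟨m, hm⟩ := nint_lt_iff.mp hbady
    have hexp : ((k:ℝ)+1)*hh (j+1) = (k:ℝ)*hh (j+1) + hh (j+1) := by ring
    have hxy : |x - y| < hh (j+1) := by
      rw [abs_lt]
      obtain ⟨ha1, ha2⟩ := hxIv
      obtain ⟨hb1, hb2⟩ := hyIv
      constructor <;> [skip; skip] <;> nlinarith
    show nint ((q:ℝ)^2*x - η q) < cc q + (q:ℝ)^2 * hh (j+1)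
    apply nint_lt_iff.mpr
    refine ⟨m, ?_⟩
    have hdecomp : (q:ℝ)^2*x - η q - m = (q:ℝ)^2*(x-y) + ((q:ℝ)^2*y - η q - m) := by ring
    have hmul : (q:ℝ)^2*|x-y| < (q:ℝ)^2 * hh (j+1) := mul_lt_mul_of_pos_left hxy hQ0
    calc |(q:ℝ)^2*x - η q - m| = |(q:ℝ)^2*(x-y) + ((q:ℝ)^2*y - η q - m)| := by rw [hdecomp]
    _ ≤ |(q:ℝ)^2*(x-y)| + |(q:ℝ)^2*y - η q - m| := abs_add_le _ _
    _ = (q:ℝ)^2*|x-y| + |(q:ℝ)^2*y - η q - m| := by rw [abs_mul, abs_of_nonneg hQ0.le]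
    _ < (q:ℝ)^2 * hh (j+1) + cc q := by linarith
    _ = cc q + (q:ℝ)^2 * hh (j+1) := by ring
  -- measure estimate per bad set
  have hterm : ∀ q ∈ Finset.Ico (RRq j) (RRq (j+1)),
      volume (Bad q ∩ UU η p) ≤ ENNReal.ofReal (16 * cc q * vv η p) := by
    intro q hqmem
    rw [Finset.mem_Ico] at hqmem
    have hq2 : 2 ≤ q := le_trans (RRq_two_le j) hqmem.1
    have hii := cond_ii hq2 hqmem.2
    have hi : 1 ≤ (q:ℝ)^2 * hh p := cond_i hq2 hqmem.1
    have hccpos := cc_pos hq2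
    have hccgam := cc_le_gam hq2
    have hQ0 : (0:ℝ) < (q:ℝ)^2 := by
      have : (0:ℕ) < q := by omega
      positivity
    set c' := cc q + (q:ℝ)^2 * hh (j+1) with hc'
    have hc'pos : 0 < c' := by
      have := hh_pos (j+1)
      positivity
    have hc'le : c' ≤ 2 * cc q := by rw [hc']; linarith
    have hc'half : c' ≤ 1/2 := by
      have : gam = 1/8192 := rfl
      linarith [hc'le, hccgam]
    have split : Bad q ∩ UU η p ⊆
        ⋃ k ∈ AA η p, ({x : ℝ | nint ((q:ℝ)^2*x - η q) < c'} ∩ Iv p k) := by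
      rintro x ⟨hbx, hux⟩
      simp only [UU, Set.mem_iUnion] at hux
      obtain ⟨k, hkA, hkI⟩ := hux
      exact Set.mem_iUnion₂.mpr ⟨k, hkA, hbx, hkI⟩
    calc volume (Bad q ∩ UU η p)
        ≤ volume (⋃ k ∈ AA η p, ({x : ℝ | nint ((q:ℝ)^2*x - η q) < c'} ∩ Iv p k)) :=
          measure_mono split
    _ ≤ ∑ k ∈ AA η p, volume ({x : ℝ | nint ((q:ℝ)^2*x - η q) < c'} ∩ Iv p k) :=
          measure_biUnion_finset_le _ _
    _ ≤ ∑ k ∈ AA η p, ENNReal.ofReal (8 * c' * hh p) := by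
          apply Finset.sum_le_sum
          intro k _
          have hIv : Iv p k = Set.Ico ((k:ℝ)*hh p) ((k:ℝ)*hh p + hh p) := by
            unfold Iv
            congr 1
            ring
          rw [hIv]
          exact key hq2 (η q) hc'pos hc'half (hh_pos p) hi
    _ = ((AA η p).card : ENNReal) * ENNReal.ofReal (8 * c' * hh p) := by
          rw [Finset.sum_const, nsmul_eq_mul]
    _ = ENNReal.ofReal (((AA η p).card : ℝ) * (8 * c' * hh p)) := by
          rw [← ENNReal.ofReal_natCast, ← ENNReal.ofReal_mul (by positivity)]
    _ ≤ ENNReal.ofReal (16 * cc q * vv η p) := by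
          apply ENNReal.ofReal_le_ofReal
          have hcard : (0:ℝ) ≤ ((AA η p).card : ℝ) := by positivity
          have hhp := hh_pos p
          unfold vv
          have h8 : 8 * c' ≤ 16 * cc q := by linarith
          nlinarith [mul_le_mul_of_nonneg_right h8 (mul_nonneg hcard hhp.le)]
  -- combine
  have hvol : volume (UU η j) ≤ volume (UU η (j+1)) +
      ∑ q ∈ Finset.Ico (RRq j) (RRq (j+1)), volume (Bad q ∩ UU η p) := by
    calc volume (UU η j)
        ≤ volume (UU η (j+1) ∪ ⋃ q ∈ Finset.Ico (RRq j) (RRq (j+1)), (Bad q ∩ UU η p)) :=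
          measure_mono cover
    _ ≤ volume (UU η (j+1)) +
          volume (⋃ q ∈ Finset.Ico (RRq j) (RRq (j+1)), (Bad q ∩ UU η p)) :=
          measure_union_le _ _
    _ ≤ _ := add_le_add_right (measure_biUnion_finset_le _ _) _
  have hsum2 : ∑ q ∈ Finset.Ico (RRq j) (RRq (j+1)), volume (Bad q ∩ UU η p)
      ≤ ENNReal.ofReal ((13/256) * vv η p) := by
    calc ∑ q ∈ Finset.Ico (RRq j) (RRq (j+1)), volume (Bad q ∩ UU η p)
        ≤ ∑ q ∈ Finset.Ico (RRq j) (RRq (j+1)), ENNReal.ofReal (16 * cc q * vv η p) :=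
          Finset.sum_le_sum hterm
    _ = ENNReal.ofReal (∑ q ∈ Finset.Ico (RRq j) (RRq (j+1)), 16 * cc q * vv η p) := by
          rw [ENNReal.ofReal_sum_of_nonneg]
          intro q hqmem
          have hq2 : 2 ≤ q := le_trans (RRq_two_le j) (Finset.mem_Ico.mp hqmem).1
          have := cc_pos hq2
          have := vv_nonneg η p
          positivity
    _ ≤ ENNReal.ofReal ((13/256) * vv η p) := by
          apply ENNReal.ofReal_le_ofReal
          have : ∑ q ∈ Finset.Ico (RRq j) (RRq (j+1)), 16 * cc q * vv η p
              = (∑ q ∈ Finset.Ico (RRq j) (RRq (j+1)), cc q) * (16 * vv η p) := by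
            rw [Finset.sum_mul]
            apply Finset.sum_congr rfl
            intro q _
            ring
          rw [this]
          have h26 := sum_cc j
          have hvvp := vv_nonneg η p
          have : gam = 1/8192 := rfl
          nlinarith
  have final : ENNReal.ofReal (vv η j) ≤ ENNReal.ofReal (vv η (j+1) + (13/256) * vv η p) := by
    rw [← volU η j]
    calc volume (UU η j) ≤ volume (UU η (j+1)) + ENNReal.ofReal ((13/256) * vv η p) :=
          hvol.trans (add_le_add_right hsum2 _)
    _ = ENNReal.ofReal (vv η (j+1)) + ENNReal.ofReal ((13/256) * vv η p) := by rw [volU]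
    _ = ENNReal.ofReal (vv η (j+1) + (13/256) * vv η p) := by
          rw [← ENNReal.ofReal_add (vv_nonneg η (j+1)) (mul_nonneg (by norm_num) (vv_nonneg η p))]
  have hrhs : 0 ≤ vv η (j+1) + (13/256) * vv η p := by
    have := vv_nonneg η (j+1)
    have := vv_nonneg η p
    linarith
  exact (ENNReal.ofReal_le_ofReal_iff hrhs).mp final


lemma vv_zero (η : ℕ → ℝ) : vv η 0 = 1 := by
  unfold vv AA hh LL
  norm_num

lemma vv_ind (η : ℕ → ℝ) : ∀ j, 0 < vv η j ∧ vv η j ≤ 2 * vv η (j+1) := by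
  intro j
  induction j with
  | zero =>
    have h0 := vv_zero η
    have hm := master η 0
    simp only [Nat.zero_sub] at hm
    constructor
    · rw [h0]; norm_num
    · rw [h0] at hm ⊢
      linarith
  | succ n ih =>
    obtain ⟨h1, h2⟩ := ih
    have hpos : 0 < vv η (n+1) := by linarith
    refine ⟨hpos, ?_⟩
    have hm := master η (n+1)
    have hred : (n+1) - 1 = n := by omega
    rw [hred] at hm
    linarith

lemma UU_nonempty (η : ℕ → ℝ) (j : ℕ) : (UU η j).Nonempty := by
  have hv := (vv_ind η j).1
  have hcard : (AA η j).Nonempty := by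
    rw [← Finset.card_pos]
    by_contra hc
    push_neg at hc
    interval_cases h : (AA η j).card
    · unfold vv at hv
      rw [h] at hv
      norm_num at hv
  obtain ⟨k, hk⟩ := hcard
  refine ⟨(k:ℝ) * hh j, Set.mem_biUnion hk ?_⟩
  constructor
  · exact le_refl _
  · have := hh_pos j
    nlinarith

def Zs (η : ℕ → ℝ) (j : ℕ) : Set ℝ :=
  Set.Icc 0 1 ∩ ⋂ (q : ℕ) (_ : q ∈ Finset.Ico 2 (RRq (j+1))),
    {x : ℝ | cc q ≤ nint ((q:ℝ)^2*x - η q)}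

lemma Zs_closed (η : ℕ → ℝ) (j : ℕ) : IsClosed (Zs η j) := by
  apply IsClosed.inter isClosed_Icc
  apply isClosed_iInter
  intro q
  apply isClosed_iInter
  intro _
  have : {x : ℝ | cc q ≤ nint ((q:ℝ)^2*x - η q)}
      = {x : ℝ | nint ((q:ℝ)^2*x - η q) < cc q}ᶜ := by
    ext x
    simp [not_lt]
  rw [this]
  exact (isOpen_bad _ _ _).isClosed_compl

lemma Zs_antitone (η : ℕ → ℝ) (j : ℕ) : Zs η (j+1) ⊆ Zs η j := by
  rintro x ⟨hxI, hxQ⟩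
  refine ⟨hxI, ?_⟩
  rw [Set.mem_iInter₂] at hxQ ⊢
  intro q hq
  apply hxQ
  rw [Finset.mem_Ico] at hq ⊢
  exact ⟨hq.1, lt_of_lt_of_le hq.2 (RRq_mono (j+1))⟩

lemma locate (j : ℕ) : ∀ q, 2 ≤ q → q < RRq (j+1) → ∃ i, i ≤ j ∧ RRq i ≤ q ∧ q < RRq (i+1) := by
  induction j with
  | zero =>
    intro q hq hqR
    exact ⟨0, le_refl _, hq, hqR⟩
  | succ n ih =>
    intro q hq hqR
    rcases Nat.lt_or_ge q (RRq (n+1)) with h | h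
    · obtain ⟨i, hi, h1, h2⟩ := ih q hq h
      exact ⟨i, by omega, h1, h2⟩
    · exact ⟨n+1, le_refl _, h, hqR⟩

lemma UU_subset_Zs (η : ℕ → ℝ) (j : ℕ) : UU η (j+1) ⊆ Zs η j := by
  intro x hx
  have hunit := UU_subset_unit η (j+1) hx
  refine ⟨⟨hunit.1, le_of_lt hunit.2⟩, ?_⟩
  rw [Set.mem_iInter₂]
  intro q hq
  rw [Finset.mem_Ico] at hq
  obtain ⟨i, hij, h1, h2⟩ := locate j q hq.1 hq.2
  have hxU : x ∈ UU η (i+1) := UU_mono η (by omega) hx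
  simp only [UU, Set.mem_iUnion] at hxU
  obtain ⟨k, hkA, hkI⟩ := hxU
  exact (AA_succ_mem hkA).2.2 q (Finset.mem_Ico.mpr ⟨h1, h2⟩) x hkI

lemma Rbig (q : ℕ) : q < RRq (q+1) := by
  show q < 2^(26 * 2^q)
  calc q < 2^q := Nat.lt_two_pow_self
  _ ≤ 2^(26 * 2^q) := Nat.pow_le_pow_right (by norm_num)
      (by nlinarith [Nat.lt_two_pow_self (n := q), Nat.one_le_two_pow (n := q)])

end PS13

/-- Inhomogeneous approximation by squares via the Peres–Schlag method. -/
theorem stmt13 : ∃ γ : ℝ, 0 < γ ∧ ∀ η : ℕ → ℝ, ∃ θ : ℝ, ∀ q : ℕ, 2 ≤ q →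
    γ / ((q : ℝ) * Real.log q) ≤ nint ((q : ℝ) ^ 2 * θ - η q) := by
  refine ⟨PS13.gam, PS13.gam_pos, ?_⟩
  intro η
  have hZne : ∀ j, (PS13.Zs η j).Nonempty := by
    intro j
    obtain ⟨x, hx⟩ := PS13.UU_nonempty η (j+1)
    exact ⟨x, PS13.UU_subset_Zs η j hx⟩
  have hc0 : IsCompact (PS13.Zs η 0) :=
    IsCompact.of_isClosed_subset isCompact_Icc (PS13.Zs_closed η 0) Set.inter_subset_left
  obtain ⟨θ, hθ⟩ := IsCompact.nonempty_iInter_of_sequence_nonempty_isCompact_isClosed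
    (PS13.Zs η) (PS13.Zs_antitone η) hZne hc0 (PS13.Zs_closed η)
  refine ⟨θ, ?_⟩
  intro q hq
  have hθq : θ ∈ PS13.Zs η q := Set.mem_iInter.mp hθ q
  have := hθq.2
  rw [Set.mem_iInter₂] at this
  have hmem : q ∈ Finset.Ico 2 (PS13.RRq (q+1)) :=
    Finset.mem_Ico.mpr ⟨hq, PS13.Rbig q⟩
  exact this q hmem
end
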